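/- Let E = EuclideanSpace ℝ (Fin 2) and let Δ ⊆ E be the diagonal, the linear span of the vector (1,1). Let 1 ≤ k ≤ m, let x : Fin k → E be points, let w = (1/k) • ∑ i, x i be their arithmetic mean, let w_Δ be the orthogonal projection of w onto Δ, and set w' = (k/m) • w + ((m−k)/m) • w_Δ. Then for every z ∈ E: ∑ i, ‖z − x i‖² + (m−k) · (infDist z Δ)² ≥ ∑ i, ‖w' − x i‖² + (m−k) · (infDist w' Δ)², with equality if and only if z = w'. That is, w' is the unique arithmetic mean of the k points x₁,…,x_k together with m−k copies of the diagonal. -/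

import Mathlib

open scoped RealInnerProductSpace

/-- The diagonal `Δ = {(a,a) : a ∈ ℝ}` in the plane, as the linear span of `(1,1)`. -/
noncomputable def diagLine : Submodule ℝ (EuclideanSpace ℝ (Fin 2)) :=
  Submodule.span ℝ {(WithLp.equiv 2 (Fin 2 → ℝ)).symm ![1, 1]}

lemma infDist_eq_norm_sub_proj (K : Submodule ℝ (EuclideanSpace ℝ (Fin 2)))
    (z : EuclideanSpace ℝ (Fin 2)) :
    Metric.infDist z (K : Set (EuclideanSpace ℝ (Fin 2))) = ‖z - Submodule.orthogonalProjectionOnto K z‖ := by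
  rw [Metric.infDist_eq_iInf, ← Submodule.starProjection_apply, Submodule.starProjection_minimal]
  simp_rw [dist_eq_norm]
  rfl

set_option maxHeartbeats 1000000 in
/-- The arithmetic mean of `k` off-diagonal points and `m − k` copies of the
diagonal: `w' = (k/m) w + ((m−k)/m) w_Δ` is the unique minimizer of
`z ↦ ∑ᵢ ‖z − xᵢ‖² + (m−k) · infDist(z, Δ)²`. -/
theorem arithmetic_mean_with_diagonal_copies
    (k m : ℕ) (hk : 1 ≤ k) (hkm : k ≤ m)
    (x : Fin k → EuclideanSpace ℝ (Fin 2))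
    (w w' : EuclideanSpace ℝ (Fin 2))
    (hw : w = (1 / k : ℝ) • ∑ i, x i)
    (hw' : w' = ((k : ℝ) / m) • w +
      (((m : ℝ) - k) / m) • (Submodule.orthogonalProjectionOnto diagLine w : EuclideanSpace ℝ (Fin 2))) :
    ∀ z : EuclideanSpace ℝ (Fin 2),
      (∑ i, ‖w' - x i‖ ^ 2 + ((m : ℝ) - k) * Metric.infDist w' (diagLine : Set (EuclideanSpace ℝ (Fin 2))) ^ 2 ≤
        ∑ i, ‖z - x i‖ ^ 2 + ((m : ℝ) - k) * Metric.infDist z (diagLine : Set (EuclideanSpace ℝ (Fin 2))) ^ 2) ∧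
      ((∑ i, ‖z - x i‖ ^ 2 + ((m : ℝ) - k) * Metric.infDist z (diagLine : Set (EuclideanSpace ℝ (Fin 2))) ^ 2 =
        ∑ i, ‖w' - x i‖ ^ 2 + ((m : ℝ) - k) * Metric.infDist w' (diagLine : Set (EuclideanSpace ℝ (Fin 2))) ^ 2)
        ↔ z = w') := by
  intro z
  have hk0 : (k : ℝ) ≠ 0 := Nat.cast_ne_zero.mpr (by omega)
  have hm0 : (m : ℝ) ≠ 0 := Nat.cast_ne_zero.mpr (by omega)
  have hkpos : (0 : ℝ) < k := by positivity
  have hmk : (0 : ℝ) ≤ (m : ℝ) - k := by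
    have : (k : ℝ) ≤ m := Nat.cast_le.mpr hkm
    linarith
  set pw : EuclideanSpace ℝ (Fin 2) := (Submodule.orthogonalProjectionOnto diagLine w : EuclideanSpace ℝ (Fin 2)) with hpw
  set d : EuclideanSpace ℝ (Fin 2) := w - pw with hd
  have hdmem : d ∈ diagLineᗮ := Submodule.sub_starProjection_mem_orthogonal w
  have hsum : ∑ i, x i = (k : ℝ) • w := by
    rw [hw, smul_smul]
    field_simp
    rw [one_smul]
  -- projection of w'
  have hPw' : (Submodule.orthogonalProjectionOnto diagLine w' : EuclideanSpace ℝ (Fin 2)) = pw := by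
    rw [hw', map_add, map_smul, map_smul]
    push_cast
    rw [← Submodule.starProjection_apply diagLine pw, (Submodule.starProjection_eq_self_iff (K := diagLine) (v := pw)).mpr (by rw [hpw]; exact Submodule.coe_mem _), ← hpw]
    rw [← add_smul]
    have : (↑k / ↑m + (↑m - ↑k) / ↑m : ℝ) = 1 := by field_simp; ring
    rw [this, one_smul]
  have hw'pw : w' - pw = ((k : ℝ)/m) • d := by
    rw [hw', hd]
    match_scalars <;> field_simp <;> ring
  have hww' : (k : ℝ) • (w' - w) = (-((k : ℝ)*((m : ℝ)-k)/m)) • d := by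
    rw [hw', hd]
    match_scalars <;> field_simp <;> ring
  set v : EuclideanSpace ℝ (Fin 2) := z - w' with hv
  set Pv : EuclideanSpace ℝ (Fin 2) :=
    (Submodule.orthogonalProjectionOnto diagLine v : EuclideanSpace ℝ (Fin 2)) with hPv
  have hPvd : (inner (𝕜 := ℝ) Pv (d) : ℝ) = 0 :=
    (Submodule.mem_orthogonal _ _).1 hdmem Pv (Submodule.coe_mem _)
  have hzproj : z - (Submodule.orthogonalProjectionOnto diagLine z : EuclideanSpace ℝ (Fin 2))
      = (v - Pv) + ((k : ℝ)/m) • d := by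
    have hz : z = v + w' := by rw [hv]; abel
    rw [← hw'pw]
    calc z - (Submodule.orthogonalProjectionOnto diagLine z : EuclideanSpace ℝ (Fin 2))
        = (v + w') - (Pv + pw) := by
          rw [← hz]; congr 1
          rw [hz, map_add, Submodule.coe_add, hPw', hPv]
      _ = (v - Pv) + (w' - pw) := by abel
  have e1 : ∀ i : Fin k, ‖z - x i‖^2 = ‖v‖^2 + 2*(inner (𝕜 := ℝ) v (w' - x i) : ℝ) + ‖w' - x i‖^2 := by
    intro i
    have h : z - x i = v + (w' - x i) := by rw [hv]; abel
    rw [h, norm_add_sq_real]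
  have e2 : ∑ i, ‖z - x i‖^2
      = ∑ i, ‖w' - x i‖^2 + (k : ℝ)*‖v‖^2 + 2*(-((k : ℝ)*((m : ℝ)-k)/m))*(inner (𝕜 := ℝ) v (d) : ℝ) := by
    simp_rw [e1]
    rw [Finset.sum_add_distrib, Finset.sum_add_distrib, Finset.sum_const, Finset.card_univ,
      Fintype.card_fin, ← Finset.mul_sum, ← inner_sum]
    have hsum2 : ∑ i : Fin k, (w' - x i) = (k : ℝ) • (w' - w) := by
      rw [Finset.sum_sub_distrib, Finset.sum_const, Finset.card_univ, Fintype.card_fin, hsum,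
        smul_sub]
      simp [Nat.cast_smul_eq_nsmul]
    rw [hsum2, hww', real_inner_smul_right]
    push_cast
    ring
  have e3 : Metric.infDist z (diagLine : Set (EuclideanSpace ℝ (Fin 2))) ^ 2
      = ‖v - Pv‖^2 + 2*((k : ℝ)/m)*(inner (𝕜 := ℝ) v (d) : ℝ) + ((k : ℝ)/m)^2*‖d‖^2 := by
    rw [infDist_eq_norm_sub_proj, hzproj, norm_add_sq_real, real_inner_smul_right,
      inner_sub_left, hPvd, norm_smul]
    rw [Real.norm_eq_abs, mul_pow, sq_abs]
    ring
  have e4 : Metric.infDist w' (diagLine : Set (EuclideanSpace ℝ (Fin 2))) ^ 2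
      = ((k : ℝ)/m)^2*‖d‖^2 := by
    rw [infDist_eq_norm_sub_proj, hPw', hw'pw, norm_smul, Real.norm_eq_abs, mul_pow, sq_abs]
  have key : ∑ i, ‖z - x i‖ ^ 2 +
        ((m : ℝ) - k) * Metric.infDist z (diagLine : Set (EuclideanSpace ℝ (Fin 2))) ^ 2
      = (∑ i, ‖w' - x i‖ ^ 2 +
        ((m : ℝ) - k) * Metric.infDist w' (diagLine : Set (EuclideanSpace ℝ (Fin 2))) ^ 2)
        + (k : ℝ) * ‖v‖^2 + ((m : ℝ) - k) * ‖v - Pv‖^2 := by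
    rw [e2, e3, e4]
    ring
  have h1 : (0 : ℝ) ≤ (k : ℝ) * ‖v‖^2 := by positivity
  have h2 : (0 : ℝ) ≤ ((m : ℝ) - k) * ‖v - Pv‖^2 := mul_nonneg hmk (by positivity)
  constructor
  · linarith [key]
  · constructor
    · intro heq
      have h3 : (k : ℝ) * ‖v‖^2 = 0 := le_antisymm (by linarith [key]) h1
      have hv0 : ‖v‖^2 = 0 := by
        rcases mul_eq_zero.1 h3 with h | h
        · exact absurd h hk0
        · exact h
      have : v = 0 := by
        simpa using (pow_eq_zero_iff (n := 2) (by norm_num)).1 hv0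
      rw [hv] at this
      exact sub_eq_zero.1 this
    · intro hz
      have h0 : v = 0 := by rw [hv, hz, sub_self]
      have hPv0 : Pv = 0 := by rw [hPv, h0, map_zero]; rfl
      rw [key, h0, hPv0]
      simp
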